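/- Suppose v : \mathbb{R} \to \mathbb{R} is a C^2 increasing solution of \varepsilon (v'/\sqrt{1+(v')^2})' - c v' + f(v) = 0 with \varepsilon > 0, connecting 0 and 1, i.e. v(z) \to 0 as z \to -\infty, v(z) \to 1 as z \to +\infty, v'(z) \to 0 as z \to \pm\infty, and v' \in L^2(\mathbb{R}) with 0 < \int_{\mathbb{R}} (v')^2 < \infty. If f : [0,1] \to \mathbb{R} is continuous with \int_0^1 f(s) ds > 0, then c > 0. -/

import Mathlib

open Set Filter MeasureTheory intervalIntegral

/-- An increasing C² heteroclinic front between 0 and 1 for the saturating-diffusion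
traveling wave equation, with nontrivial L² derivative, must have positive speed
when `∫₀¹ f > 0`. -/
theorem stmt_5
    (f : ℝ → ℝ) (v : ℝ → ℝ) (ε c : ℝ)
    (hε : 0 < ε)
    (hC2 : ContDiff ℝ 2 v)
    (hmono : Monotone v)
    (hrange : ∀ z, v z ∈ Icc (0 : ℝ) 1)
    (hode : ∀ z : ℝ,
      ε * deriv (fun t => deriv v t / Real.sqrt (1 + (deriv v t) ^ 2)) z
        - c * deriv v z + f (v z) = 0)
    (hlim0 : Tendsto v atBot (nhds 0))
    (hlim1 : Tendsto v atTop (nhds 1))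
    (hd0 : Tendsto (deriv v) atBot (nhds 0))
    (hd1 : Tendsto (deriv v) atTop (nhds 0))
    (hL2 : Integrable (fun z => (deriv v z) ^ 2))
    (hL2pos : 0 < ∫ z : ℝ, (deriv v z) ^ 2)
    (hf : ContinuousOn f (Icc 0 1))
    (hfint : 0 < ∫ s in (0:ℝ)..1, f s) :
    0 < c := by
  set w : ℝ → ℝ := deriv v with hw_def
  -- regularity
  have h2 : ContDiff ℝ ((1 : ℕ) + 1) v := by exact_mod_cast hC2
  have hwC1 : ContDiff ℝ (1 : ℕ) w := (contDiff_succ_iff_deriv.mp h2).2.2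
  have hw_diff : Differentiable ℝ w := hwC1.differentiable (by simp)
  have hw_cont : Continuous w := hw_diff.continuous
  -- clamp of f
  set clamp : ℝ → ℝ := fun u => max 0 (min 1 u) with hclamp_def
  have hclamp_mem : ∀ u, clamp u ∈ Icc (0 : ℝ) 1 := fun u =>
    ⟨le_max_left _ _, max_le zero_le_one (min_le_left _ _)⟩
  have hclamp_cont : Continuous clamp :=
    continuous_const.max (continuous_const.min continuous_id)
  set fe : ℝ → ℝ := fun u => f (clamp u) with hfe_def
  have hfe_cont : Continuous fe := hf.comp_continuous hclamp_cont hclamp_mem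
  have hclamp_eq : ∀ u, u ∈ Icc (0 : ℝ) 1 → clamp u = u := by
    intro u hu
    simp only [hclamp_def]
    rw [min_eq_right hu.2, max_eq_right hu.1]
  have hfe_v : ∀ z, fe (v z) = f (v z) := fun z => by
    rw [hfe_def]; simp only; rw [hclamp_eq _ (hrange z)]
  set Fe : ℝ → ℝ := fun u => ∫ s in (0:ℝ)..u, fe s with hFe_def
  have hFe_deriv : ∀ u, HasDerivAt Fe (fe u) u := fun u =>
    (hfe_cont.integral_hasStrictDerivAt 0 u).hasDerivAt
  have hFe_diff : Differentiable ℝ Fe := fun u => (hFe_deriv u).differentiableAt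
  have hFe_cont : Continuous Fe := hFe_diff.continuous
  have hFe01 : Fe 1 = ∫ s in (0:ℝ)..1, f s := by
    apply intervalIntegral.integral_congr
    intro u hu
    rw [Set.uIcc_of_le (by norm_num : (0:ℝ) ≤ 1)] at hu
    simp only [hfe_def]; rw [hclamp_eq _ hu]
  -- auxiliary functions
  set s : ℝ → ℝ := fun z => Real.sqrt (1 + (w z) ^ 2) with hs_def
  have hs_pos : ∀ z, 0 < s z := fun z =>
    Real.sqrt_pos.mpr (by positivity)
  set G : ℝ → ℝ := fun z => -(1 / s z) with hG_def
  set P : ℝ → ℝ := fun t => w t / s t with hP_def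
  -- pointwise derivative computations
  have key : ∀ z, HasDerivAt (fun t => ε * G t + Fe (v t)) (c * (w z) ^ 2) z := by
    intro z
    have hx : HasDerivAt w (deriv w z) z := (hw_diff z).hasDerivAt
    have h1 : HasDerivAt (fun t => 1 + (w t) ^ 2)
        ((2 : ℕ) * (w z) ^ 1 * deriv w z) z := by
      simpa using ((hx.pow 2).const_add 1)
    have hne : (1 : ℝ) + (w z) ^ 2 ≠ 0 := by positivity
    have hsz : HasDerivAt s (((2 : ℕ) * (w z) ^ 1 * deriv w z) / (2 * s z)) z :=
      h1.sqrt hne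
    have hszne : s z ≠ 0 := (hs_pos z).ne'
    have hsq : s z ^ 2 = 1 + (w z) ^ 2 := Real.sq_sqrt (by positivity)
    -- derivative of P
    have hP : HasDerivAt P
        ((deriv w z * s z - w z * (((2 : ℕ) * (w z) ^ 1 * deriv w z) / (2 * s z)))
          / (s z) ^ 2) z := hx.div hsz hszne
    -- derivative of G
    have hG : HasDerivAt G
        (-((0 * s z - 1 * (((2 : ℕ) * (w z) ^ 1 * deriv w z) / (2 * s z)))
          / (s z) ^ 2)) z := (((hasDerivAt_const z (1:ℝ)).div hsz hszne)).neg
    -- deriv of P equals the expression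
    have hPderiv : deriv P z
        = (deriv w z * s z - w z * (((2 : ℕ) * (w z) ^ 1 * deriv w z) / (2 * s z)))
          / (s z) ^ 2 := hP.deriv
    -- dG = dP * w z
    have hrel : (-((0 * s z - 1 * (((2 : ℕ) * (w z) ^ 1 * deriv w z) / (2 * s z)))
          / (s z) ^ 2)) = deriv P z * w z := by
      rw [hPderiv]
      field_simp
      linear_combination (-(2 : ℝ) * w z * deriv w z) * hsq
    have hG' : HasDerivAt G (deriv P z * w z) z := hrel ▸ hG
    have hFv : HasDerivAt (fun t => Fe (v t)) (fe (v z) * deriv v z) z :=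
      (hFe_deriv (v z)).comp z (hC2.differentiable (by simp) z).hasDerivAt
    have hsum : HasDerivAt (fun t => ε * G t + Fe (v t))
        (ε * (deriv P z * w z) + fe (v z) * deriv v z) z :=
      (hG'.const_mul ε).add hFv
    have hodez := hode z
    have hPP : deriv (fun t => deriv v t / Real.sqrt (1 + (deriv v t) ^ 2)) z
        = deriv P z := rfl
    rw [hPP] at hodez
    have : ε * (deriv P z * w z) + fe (v z) * deriv v z = c * (w z) ^ 2 := by
      rw [hfe_v z]
      have : ε * deriv P z = c * w z - f (v z) := by linarith [hodez]
      calc ε * (deriv P z * w z) + f (v z) * deriv v z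
          = (ε * deriv P z) * w z + f (v z) * w z := by rw [hw_def]; ring
        _ = (c * w z - f (v z)) * w z + f (v z) * w z := by rw [this]
        _ = c * (w z) ^ 2 := by ring
    rwa [this] at hsum
  -- FTC on [-T, T]
  set H : ℝ → ℝ := fun t => ε * G t + Fe (v t) with hH_def
  have hcont_int : Continuous fun z => c * (w z) ^ 2 :=
    continuous_const.mul (hw_cont.pow 2)
  have hFTC : ∀ T : ℝ, (∫ z in (-T)..T, c * (w z) ^ 2) = H T - H (-T) := by
    intro T
    exact intervalIntegral.integral_eq_sub_of_hasDerivAt (fun t _ => key t)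
      (hcont_int.intervalIntegrable _ _)
  -- limits of H
  have hGfun : ∀ z, G z = -(1 / Real.sqrt (1 + (w z) ^ 2)) := fun z => rfl
  have hgcont : Continuous fun x : ℝ => -(1 / Real.sqrt (1 + x ^ 2)) := by
    apply Continuous.neg
    apply Continuous.div continuous_const
    · exact (continuous_const.add (continuous_pow 2)).sqrt
    · intro x
      exact (Real.sqrt_pos.mpr (by positivity)).ne'
  have hGtop : Tendsto G atTop (nhds (-1)) := by
    have h := (hgcont.continuousAt (x := 0)).tendsto.comp hd1
    norm_num [Real.sqrt_one] at h
    exact h.congr fun z => by simp [Function.comp, hG_def, hs_def, one_div]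
  have hGbot : Tendsto G atBot (nhds (-1)) := by
    have h := (hgcont.continuousAt (x := 0)).tendsto.comp hd0
    norm_num [Real.sqrt_one] at h
    exact h.congr fun z => by simp [Function.comp, hG_def, hs_def, one_div]
  have hFvtop : Tendsto (fun t => Fe (v t)) atTop (nhds (Fe 1)) :=
    (hFe_cont.continuousAt.tendsto).comp hlim1
  have hFvbot : Tendsto (fun t => Fe (v t)) atBot (nhds (Fe 0)) :=
    (hFe_cont.continuousAt.tendsto).comp hlim0
  have hHtop : Tendsto H atTop (nhds (ε * (-1) + Fe 1)) :=
    ((hGtop.const_mul ε).add hFvtop)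
  have hHbot : Tendsto H atBot (nhds (ε * (-1) + Fe 0)) :=
    ((hGbot.const_mul ε).add hFvbot)
  have hHneg : Tendsto (fun T : ℝ => H (-T)) atTop (nhds (ε * (-1) + Fe 0)) :=
    hHbot.comp tendsto_neg_atTop_atBot
  have hdiff : Tendsto (fun T : ℝ => H T - H (-T)) atTop
      (nhds ((ε * (-1) + Fe 1) - (ε * (-1) + Fe 0))) := hHtop.sub hHneg
  -- limit of the interval integrals
  have hint : Tendsto (fun T : ℝ => ∫ z in (-T)..T, c * (w z) ^ 2) atTop
      (nhds (∫ z : ℝ, c * (w z) ^ 2)) :=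
    intervalIntegral_tendsto_integral (hL2.const_mul c)
      tendsto_neg_atTop_atBot tendsto_id
  have hint' : Tendsto (fun T : ℝ => ∫ z in (-T)..T, c * (w z) ^ 2) atTop
      (nhds ((ε * (-1) + Fe 1) - (ε * (-1) + Fe 0))) := by
    apply hdiff.congr
    intro T
    exact (hFTC T).symm
  have heq : (∫ z : ℝ, c * (w z) ^ 2) = (ε * (-1) + Fe 1) - (ε * (-1) + Fe 0) :=
    tendsto_nhds_unique hint hint'
  have hFe0 : Fe 0 = 0 := by simp [hFe_def]
  have hcI : c * (∫ z : ℝ, (w z) ^ 2) = ∫ s in (0:ℝ)..1, f s := by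
    rw [← MeasureTheory.integral_const_mul, heq, hFe0, hFe01]; ring
  nlinarith [hL2pos, hfint, hcI]
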